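/- Let M ≥ 1, γ₁ᵢ ≠ 0, γᵢᵢ > 0, 0 < ξ₁ < 1 and 0 < ξ₁ + ξᵢ·γᵢᵢ/γ₁ᵢ < 1. Define D = (1 − ξ₁)·γ₁ᵢ − ξᵢ·γᵢᵢ and φ⁽ⁱ⁾ = γᵢᵢ·(γ₁ᵢ + M·D)²/(M·γ₁ᵢ·D). Then φ⁽ⁱ⁾ > 0. -/

import Mathlib

/-- Positivity of the fitted volatility parameters φ⁽ⁱ⁾, i ≥ 2, in Theorem 1. -/
theorem phi_i_pos (M : ℕ) (hM : 1 ≤ M) (γ₁ᵢ γᵢᵢ ξ₁ ξᵢ : ℝ)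
    (hγ1 : γ₁ᵢ ≠ 0) (hγi : γᵢᵢ > 0) (hξ0 : 0 < ξ₁) (hξ1 : ξ₁ < 1)
    (hz0 : 0 < ξ₁ + ξᵢ * γᵢᵢ / γ₁ᵢ) (hz1 : ξ₁ + ξᵢ * γᵢᵢ / γ₁ᵢ < 1)
    (D φᵢ : ℝ) (hD : D = (1 - ξ₁) * γ₁ᵢ - ξᵢ * γᵢᵢ)
    (hφ : φᵢ = γᵢᵢ * (γ₁ᵢ + M * D) ^ 2 / (M * γ₁ᵢ * D)) :
    φᵢ > 0 := by
  have hr : D / γ₁ᵢ = 1 - (ξ₁ + ξᵢ * γᵢᵢ / γ₁ᵢ) := by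
    rw [hD]; field_simp; ring
  have hrpos : 0 < D / γ₁ᵢ := by rw [hr]; linarith
  have hMpos : (0 : ℝ) < (M : ℝ) := by exact_mod_cast Nat.lt_of_lt_of_le Nat.zero_lt_one hM
  have hden : 0 < M * γ₁ᵢ * D := by
    have : γ₁ᵢ * D = γ₁ᵢ ^ 2 * (D / γ₁ᵢ) := by field_simp
    have h2 : 0 < γ₁ᵢ * D := by
      rw [this]; positivity
    nlinarith
  have hne : γ₁ᵢ + M * D ≠ 0 := by
    have h1 : γ₁ᵢ + M * D = γ₁ᵢ * (1 + M * (D / γ₁ᵢ)) := by field_simp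
    have h2 : 0 < 1 + M * (D / γ₁ᵢ) := by positivity
    rw [h1]
    exact mul_ne_zero hγ1 (ne_of_gt h2)
  rw [hφ]
  positivity
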